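/- arXiv:1711.08409 — 2 statements merged into one kernel-verified Lean document; each statement's English description precedes it below -/
import Mathlib

section
/- A bounded pseudo-hoop A is involutive (x^{-∼} = x^{∼-} = x for all x) if and only if for all x, y ∈ A: x → y = y^- ⇝ x^- and x ⇝ y = y^∼ → x^∼. -/
universe u v

class PseudoHoop (A : Type u) extends One A, Mul A where
  rimp : A → A → A
  limp : A → A → A
  mul_one' : ∀ x : A, x * 1 = x
  one_mul' : ∀ x : A, 1 * x = x
  rimp_self : ∀ x : A, rimp x x = 1
  limp_self : ∀ x : A, limp x x = 1
  mul_rimp : ∀ x y z : A, rimp (x * y) z = rimp x (rimp y z)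
  mul_limp : ∀ x y z : A, limp (x * y) z = limp y (limp x z)
  div₁ : ∀ x y : A, (rimp x y) * x = (rimp y x) * y
  div₂ : ∀ x y : A, (rimp x y) * x = x * (limp x y)
  div₃ : ∀ x y : A, x * (limp x y) = y * (limp y x)

namespace PseudoHoop

/-- The order on a pseudo-hoop: `x ≤ y` iff `x → y = 1`. -/
def ple {A : Type u} [PseudoHoop A] (x y : A) : Prop := rimp x y = 1

/-- The meet `x ∧ y = (x → y) ⊙ x`. -/
def meet {A : Type u} [PseudoHoop A] (x y : A) : A := (rimp x y) * x

/-- `x ∨₁ y = (x → y) ⇝ y`. -/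
def join₁ {A : Type u} [PseudoHoop A] (x y : A) : A := limp (rimp x y) y

/-- `x ∨₂ y = (x ⇝ y) → y`. -/
def join₂ {A : Type u} [PseudoHoop A] (x y : A) : A := rimp (limp x y) y

/-- Iterated implication: `x →⁰ y = y`, `x →ⁿ⁺¹ y = x → (x →ⁿ y)`. -/
def rimpPow {A : Type u} [PseudoHoop A] (x : A) : ℕ → A → A
  | 0, y => y
  | n + 1, y => rimp x (rimpPow x n y)

/-- A filter of a pseudo-hoop. -/
structure IsFilter {A : Type u} [PseudoHoop A] (F : Set A) : Prop where
  nonempty : F.Nonempty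
  mul_mem : ∀ {x y : A}, x ∈ F → y ∈ F → x * y ∈ F
  upward : ∀ {x y : A}, x ∈ F → ple x y → y ∈ F

/-- A normal filter: `x → y ∈ F` iff `x ⇝ y ∈ F`. -/
def IsNormalFilter {A : Type u} [PseudoHoop A] (F : Set A) : Prop :=
  IsFilter F ∧ ∀ x y : A, rimp x y ∈ F ↔ limp x y ∈ F

def IsProper {A : Type u} [PseudoHoop A] (F : Set A) : Prop := F ≠ Set.univ

/-- A pseudo-hoop is simple if `{1}` is its unique proper filter. -/
def IsSimple (A : Type u) [PseudoHoop A] : Prop :=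
  ∀ F : Set A, IsFilter F → IsProper F → F = {1}

/-- A pseudo-hoop is Wajsberg if `x ∨₁ y = y ∨₁ x` and `x ∨₂ y = y ∨₂ x`. -/
def IsWajsberg (A : Type u) [PseudoHoop A] : Prop :=
  ∀ x y : A, join₁ x y = join₁ y x ∧ join₂ x y = join₂ y x

/-- A fantastic filter. -/
def IsFantasticFilter {A : Type u} [PseudoHoop A] (F : Set A) : Prop :=
  IsFilter F ∧ ∀ x y : A,
    (rimp y x ∈ F → rimp (join₁ x y) x ∈ F) ∧
    (limp y x ∈ F → limp (join₂ x y) x ∈ F)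

def IS₂ {A : Type u} [PseudoHoop A] (μ : A → A) : Prop :=
  ∀ x y : A, μ (x * y) = μ x * μ (limp x (x * y)) ∧
    μ (x * y) = μ (rimp y (x * y)) * μ y

def IS₃ {A : Type u} [PseudoHoop A] (μ : A → A) : Prop :=
  ∀ x y : A, μ (μ x * μ y) = μ x * μ y

def IS₄ {A : Type u} [PseudoHoop A] (μ : A → A) : Prop :=
  ∀ x y : A, μ (rimp (μ x) (μ y)) = rimp (μ x) (μ y) ∧
    μ (limp (μ x) (μ y)) = limp (μ x) (μ y)

/-- Type I state operator. -/
def IsStateI {A : Type u} [PseudoHoop A] (μ : A → A) : Prop :=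
  (∀ x y : A, μ (rimp x y) = rimp (μ (join₁ x y)) (μ y) ∧
      μ (limp x y) = limp (μ (join₂ x y)) (μ y)) ∧ IS₂ μ ∧ IS₃ μ ∧ IS₄ μ

/-- Type II state operator. -/
def IsStateII {A : Type u} [PseudoHoop A] (μ : A → A) : Prop :=
  (∀ x y : A, μ (rimp x y) = rimp (μ (join₁ y x)) (μ y) ∧
      μ (limp x y) = limp (μ (join₂ y x)) (μ y)) ∧ IS₂ μ ∧ IS₃ μ ∧ IS₄ μ

/-- Type III state operator. -/
def IsStateIII {A : Type u} [PseudoHoop A] (μ : A → A) : Prop :=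
  (∀ x y : A, μ (rimp x y) = rimp (μ x) (μ (meet x y)) ∧
      μ (limp x y) = limp (μ x) (μ (meet x y))) ∧ IS₂ μ ∧ IS₃ μ ∧ IS₄ μ

end PseudoHoop

open PseudoHoop

/-- A bounded pseudo-hoop: a pseudo-hoop with a least element `0`. -/
class BoundedPseudoHoop (A : Type u) extends PseudoHoop A, Zero A where
  zero_le : ∀ x : A, rimp 0 x = 1

namespace BoundedPseudoHoop

/-- `x⁻ = x → 0`. -/
def negr {A : Type u} [BoundedPseudoHoop A] (x : A) : A := rimp x 0

/-- `x∼ = x ⇝ 0`. -/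
def negl {A : Type u} [BoundedPseudoHoop A] (x : A) : A := limp x 0

/-- A bounded pseudo-hoop is good if `x⁻∼ = x∼⁻` for all `x`. -/
def IsGood (A : Type u) [BoundedPseudoHoop A] : Prop :=
  ∀ x : A, negl (negr x) = negr (negl x)

/-- A bounded pseudo-hoop is involutive if `x⁻∼ = x∼⁻ = x` for all `x`. -/
def IsInvolutive (A : Type u) [BoundedPseudoHoop A] : Prop :=
  ∀ x : A, negl (negr x) = x ∧ negr (negl x) = x

/-- The set of dense elements. -/
def Den (A : Type u) [BoundedPseudoHoop A] : Set A :=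
  {x : A | negl (negr x) = 1}

/-- An involutive filter: `x⁻∼ → x ∈ F` and `x∼⁻ ⇝ x ∈ F` for all `x`. -/
def IsInvolutiveFilter {A : Type u} [BoundedPseudoHoop A] (F : Set A) : Prop :=
  IsFilter F ∧ ∀ x : A, rimp (negl (negr x)) x ∈ F ∧ limp (negr (negl x)) x ∈ F

end BoundedPseudoHoop

open BoundedPseudoHoop

section Aux

variable {A : Type u} [BoundedPseudoHoop A]

open PseudoHoop

lemma aux_r_of_l {x y : A} (h : limp x y = 1) : rimp x y = 1 := by
  have h2 : rimp x y * x = x := by rw [PseudoHoop.div₂, h, PseudoHoop.mul_one']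
  have h3 := congrArg (fun t => rimp t y) h2
  simp only [PseudoHoop.mul_rimp, PseudoHoop.rimp_self] at h3
  exact h3.symm

lemma aux_l_of_r {x y : A} (h : rimp x y = 1) : limp x y = 1 := by
  have h2 : x * limp x y = x := by rw [← PseudoHoop.div₂, h, PseudoHoop.one_mul']
  have h3 := congrArg (fun t => limp t y) h2
  simp only [PseudoHoop.mul_limp, PseudoHoop.limp_self] at h3
  exact h3.symm

lemma aux_rimp_one (x : A) : rimp x 1 = 1 := by
  have h0 : rimp 0 (x * 0) = 1 := BoundedPseudoHoop.zero_le _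
  conv_lhs => rw [← h0, ← PseudoHoop.mul_rimp]
  exact PseudoHoop.rimp_self _

lemma aux_antisymm {x y : A} (h1 : rimp x y = 1) (h2 : rimp y x = 1) : x = y := by
  have := PseudoHoop.div₁ x y
  rw [h1, h2, PseudoHoop.one_mul', PseudoHoop.one_mul'] at this
  exact this

lemma aux_trans {x y z : A} (h1 : rimp x y = 1) (h2 : rimp y z = 1) : rimp x z = 1 := by
  have hx : rimp y x * y = x := by
    have := PseudoHoop.div₁ x y
    rw [h1, PseudoHoop.one_mul'] at this
    exact this.symm
  rw [← hx, PseudoHoop.mul_rimp, h2, aux_rimp_one]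

lemma aux_ltrans {x y z : A} (h1 : limp x y = 1) (h2 : limp y z = 1) : limp x z = 1 :=
  aux_l_of_r (aux_trans (aux_r_of_l h1) (aux_r_of_l h2))

lemma aux_assoc (x y z : A) : x * y * z = x * (y * z) := by
  have h : ∀ w : A, rimp (x * y * z) w = rimp (x * (y * z)) w := fun w => by
    simp only [PseudoHoop.mul_rimp]
  apply aux_antisymm
  · rw [h]; exact PseudoHoop.rimp_self _
  · rw [← h]; exact PseudoHoop.rimp_self _

lemma aux_mono_left {a b : A} (u : A) (h : rimp a b = 1) : rimp (u * a) (u * b) = 1 := by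
  have hb : limp b (limp u (u * b)) = 1 := by
    rw [← PseudoHoop.mul_limp]; exact PseudoHoop.limp_self _
  have ha := aux_ltrans (aux_l_of_r h) hb
  apply aux_r_of_l
  rw [PseudoHoop.mul_limp]; exact ha

lemma aux_mono_right {a b : A} (u : A) (h : rimp a b = 1) : rimp (a * u) (b * u) = 1 := by
  have hb : rimp b (rimp u (b * u)) = 1 := by
    rw [← PseudoHoop.mul_rimp]; exact PseudoHoop.rimp_self _
  have ha := aux_trans h hb
  rw [PseudoHoop.mul_rimp]; exact ha

lemma aux_rimp_anti {a b : A} (c : A) (h : rimp a b = 1) :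
    rimp (rimp b c) (rimp a c) = 1 := by
  have h1 : rimp (rimp b c * a) (rimp b c * b) = 1 := aux_mono_left _ h
  have h2 : rimp (rimp b c * b) c = 1 := by
    rw [PseudoHoop.mul_rimp]; exact PseudoHoop.rimp_self _
  have h3 := aux_trans h1 h2
  rw [← PseudoHoop.mul_rimp]; exact h3

lemma aux_limp_anti {a b : A} (c : A) (h : rimp a b = 1) :
    limp (limp b c) (limp a c) = 1 := by
  have h1 : rimp (a * limp b c) (b * limp b c) = 1 := aux_mono_right _ h
  have h2 : limp (b * limp b c) c = 1 := by
    rw [PseudoHoop.mul_limp]; exact PseudoHoop.limp_self _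
  have h3 := aux_ltrans (aux_l_of_r h1) h2
  rw [← PseudoHoop.mul_limp]; exact h3

lemma aux_swap (x y z : A) : rimp x (limp y z) = limp y (rimp x z) := by
  have s1 : limp (rimp x (limp y z) * x) (limp y z) = 1 :=
    aux_l_of_r (by rw [PseudoHoop.mul_rimp]; exact PseudoHoop.rimp_self _)
  have s2 : limp (y * (rimp x (limp y z) * x)) z = 1 := by
    rw [PseudoHoop.mul_limp]; exact s1
  have s3 : rimp (y * rimp x (limp y z) * x) z = 1 := by
    rw [aux_assoc]; exact aux_r_of_l s2
  have s4 : rimp (y * rimp x (limp y z)) (rimp x z) = 1 := by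
    rw [← PseudoHoop.mul_rimp]; exact s3
  have s6 : limp (rimp x (limp y z)) (limp y (rimp x z)) = 1 := by
    rw [← PseudoHoop.mul_limp]; exact aux_l_of_r s4
  have hab := aux_r_of_l s6
  have t1 : limp (y * limp y (rimp x z)) (rimp x z) = 1 := by
    rw [PseudoHoop.mul_limp]; exact PseudoHoop.limp_self _
  have t2 : rimp (y * limp y (rimp x z) * x) z = 1 := by
    rw [PseudoHoop.mul_rimp]; exact aux_r_of_l t1
  have t3 : limp (y * (limp y (rimp x z) * x)) z = 1 := by
    rw [← aux_assoc]; exact aux_l_of_r t2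
  have t4 : limp (limp y (rimp x z) * x) (limp y z) = 1 := by
    rw [← PseudoHoop.mul_limp]; exact t3
  have t5 : rimp (limp y (rimp x z)) (rimp x (limp y z)) = 1 := by
    rw [← PseudoHoop.mul_rimp]; exact aux_r_of_l t4
  exact aux_antisymm hab t5

lemma aux_le_dn (x : A) : rimp x (negl (negr x)) = 1 := by
  show rimp x (limp (rimp x 0) 0) = 1
  have h1 : rimp (rimp x 0 * x) 0 = 1 := by
    rw [PseudoHoop.mul_rimp]; exact PseudoHoop.rimp_self _
  apply aux_r_of_l
  rw [← PseudoHoop.mul_limp]; exact aux_l_of_r h1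

lemma aux_le_dn' (x : A) : rimp x (negr (negl x)) = 1 := by
  show rimp x (rimp (limp x 0) 0) = 1
  have h1 : limp (x * limp x 0) 0 = 1 := by
    rw [PseudoHoop.mul_limp]; exact PseudoHoop.limp_self _
  rw [← PseudoHoop.mul_rimp]; exact aux_r_of_l h1

lemma aux_nnn_r (x : A) : negr (negl (negr x)) = negr x := by
  apply aux_antisymm
  · exact aux_rimp_anti 0 (aux_le_dn x)
  · exact aux_le_dn' (negr x)

lemma aux_nnn_l (x : A) : negl (negr (negl x)) = negl x := by
  apply aux_antisymm
  · exact aux_r_of_l (aux_limp_anti 0 (aux_le_dn' x))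
  · exact aux_le_dn (negl x)

end Aux

theorem stmt7 {A : Type u} [BoundedPseudoHoop A] :
    IsInvolutive A ↔ ∀ x y : A,
      rimp x y = limp (negr y) (negr x) ∧ limp x y = rimp (negl y) (negl x) := by
  constructor
  · intro hinv x y
    refine ⟨?_, ?_⟩
    · conv_lhs => rw [← (hinv y).1]
      show PseudoHoop.rimp x (PseudoHoop.limp (negr y) 0) =
        PseudoHoop.limp (negr y) (PseudoHoop.rimp x 0)
      exact aux_swap x (negr y) 0
    · conv_lhs => rw [← (hinv y).2]
      show PseudoHoop.limp x (PseudoHoop.rimp (negl y) 0) =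
        PseudoHoop.rimp (negl y) (PseudoHoop.limp x 0)
      exact (aux_swap (negl y) x 0).symm
  · intro H x
    refine ⟨?_, ?_⟩
    · apply aux_antisymm _ (aux_le_dn x)
      rw [(H (negl (negr x)) x).1, aux_nnn_r]
      exact PseudoHoop.limp_self _
    · apply aux_antisymm _ (aux_le_dn' x)
      apply aux_r_of_l
      rw [(H (negr (negl x)) x).2, aux_nnn_l]
      exact PseudoHoop.rimp_self _
end

section
/- If A is a good bounded pseudo-hoop, then a filter F of A is fantastic if and only if it is involutive. -/
universe u v

open PseudoHoop

open BoundedPseudoHoop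

section PHAux

open PseudoHoop BoundedPseudoHoop

variable {A : Type u} [BoundedPseudoHoop A]

lemma ph_one_rimp_rimp (a b : A) : rimp (1:A) (rimp a b) = rimp a b := by
  have h := mul_rimp (1:A) a b
  rw [one_mul'] at h
  exact h.symm

lemma ph_antisymm {a b : A} (h1 : rimp a b = 1) (h2 : rimp b a = 1) : a = b := by
  have h := div₁ a b
  rw [h1, h2, one_mul', one_mul'] at h
  exact h

lemma ph_rimp_one_aux (x : A) : rimp (rimp x (1:A)) (1:A) = 1 := by
  have ht : rimp (rimp x (1:A)) (1:A) * rimp x (1:A) = rimp x (1:A) := by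
    have hd := div₁ (rimp x (1:A)) (1:A)
    rw [mul_one'] at hd
    rw [hd]
    exact ph_one_rimp_rimp x 1
  conv_lhs => rw [← ht]
  rw [mul_rimp, rimp_self]

lemma ph_one_rimp (x : A) : rimp (1:A) x = x := by
  apply ph_antisymm
  · -- rimp (rimp 1 x) x = 1
    have hd := div₁ (1:A) x
    rw [mul_one'] at hd
    rw [hd, mul_rimp, rimp_self]
    exact ph_rimp_one_aux x
  · -- rimp x (rimp 1 x) = 1
    have h := mul_rimp x (1:A) x
    rw [mul_one', rimp_self] at h
    exact h.symm

lemma ph_rimp_one (x : A) : rimp x (1:A) = 1 := by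
  have hx : x = rimp x (1:A) * x := by
    have hd := div₁ (1:A) x
    rw [mul_one', ph_one_rimp] at hd
    exact hd
  conv_lhs => rw [hx]
  rw [mul_rimp, rimp_self]

lemma ph_one_limp (x : A) : limp (1:A) x = x := by
  have h := div₂ (1:A) x
  rw [mul_one', one_mul', ph_one_rimp] at h
  exact h.symm

lemma ph_limp_one (x : A) : limp x (1:A) = 1 := by
  have hx : x = x * limp x (1:A) := by
    have h := div₃ (1:A) x
    rw [one_mul', ph_one_limp] at h
    exact h
  conv_lhs => rw [hx]
  rw [mul_limp, limp_self]

lemma ph_ple_iff_limp {x y : A} : ple x y ↔ limp x y = 1 := by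
  constructor
  · intro h
    have h2 := div₂ x y
    rw [show rimp x y = 1 from h, one_mul'] at h2
    have h3 : limp x y = limp (x * limp x y) y := by rw [← h2]
    rw [h3, mul_limp, limp_self]
  · intro h
    have h2 := div₂ x y
    rw [h, mul_one'] at h2
    show rimp x y = 1
    have h3 : rimp x y = rimp (rimp x y * x) y := by rw [h2]
    rw [h3, mul_rimp, rimp_self]

lemma ph_ple_refl (x : A) : ple x x := rimp_self x

lemma ph_ple_one (x : A) : ple x 1 := ph_rimp_one x

lemma ph_ple_trans {a b c : A} (h1 : ple a b) (h2 : ple b c) : ple a c := by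
  have hd := div₁ a b
  rw [show rimp a b = 1 from h1, one_mul'] at hd
  show rimp a c = 1
  rw [hd, mul_rimp, show rimp b c = 1 from h2, ph_rimp_one]

lemma ph_resid_r {a b c : A} : ple (a*b) c ↔ ple a (rimp b c) := by
  show rimp (a*b) c = 1 ↔ rimp a (rimp b c) = 1
  rw [mul_rimp]

lemma ph_resid_l {a b c : A} : ple (a*b) c ↔ ple b (limp a c) := by
  rw [ph_ple_iff_limp, ph_ple_iff_limp, mul_limp]

lemma ph_mp_r (x y : A) : ple (rimp x y * x) y := by
  show rimp (rimp x y * x) y = 1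
  rw [mul_rimp, rimp_self]

lemma ph_mp_l (x y : A) : ple (x * limp x y) y := by
  rw [ph_ple_iff_limp, mul_limp, limp_self]

lemma ph_mul_assoc (a b c : A) : a*b*c = a*(b*c) := by
  apply ph_antisymm
  · have h := rimp_self (a*(b*c))
    rw [mul_rimp, mul_rimp] at h
    show rimp (a*b*c) (a*(b*c)) = 1
    rw [mul_rimp, mul_rimp]
    exact h
  · have h := rimp_self (a*b*c)
    rw [mul_rimp, mul_rimp] at h
    show rimp (a*(b*c)) (a*b*c) = 1
    rw [mul_rimp, mul_rimp]
    exact h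

lemma ph_mul_le_left (x y : A) : ple (x*y) x := by
  rw [ph_ple_iff_limp, mul_limp, limp_self, ph_limp_one]

lemma ph_mul_le_right (x y : A) : ple (x*y) y := by
  show rimp (x*y) y = 1
  rw [mul_rimp, rimp_self, ph_rimp_one]

lemma ph_mul_mono_left {a b : A} (c : A) (h : ple a b) : ple (c*a) (c*b) :=
  ph_resid_l.mpr (ph_ple_trans h (ph_resid_l.mp (ph_ple_refl (c*b))))

lemma ph_mul_mono_right {a b : A} (c : A) (h : ple a b) : ple (a*c) (b*c) :=
  ph_resid_r.mpr (ph_ple_trans h (ph_resid_r.mp (ph_ple_refl (b*c))))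

lemma ph_rimp_mono {b c : A} (a : A) (h : ple b c) : ple (rimp a b) (rimp a c) :=
  ph_resid_r.mp (ph_ple_trans (ph_mp_r a b) h)

lemma ph_rimp_anti {a b : A} (c : A) (h : ple a b) : ple (rimp b c) (rimp a c) :=
  ph_resid_r.mp (ph_ple_trans (ph_mul_mono_left _ h) (ph_mp_r b c))

lemma ph_limp_mono {b c : A} (a : A) (h : ple b c) : ple (limp a b) (limp a c) :=
  ph_resid_l.mp (ph_ple_trans (ph_mp_l a b) h)

lemma ph_limp_anti {a b : A} (c : A) (h : ple a b) : ple (limp b c) (limp a c) :=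
  ph_resid_l.mp (ph_ple_trans (ph_mul_mono_right _ h) (ph_mp_l b c))

lemma ph_exchange (a b c : A) : rimp a (limp b c) = limp b (rimp a c) := by
  apply ph_antisymm
  · -- ple (rimp a (limp b c)) (limp b (rimp a c))
    have h1 : ple (b * (rimp a (limp b c) * a)) c :=
      ph_ple_trans (ph_mul_mono_left b (ph_mp_r a (limp b c))) (ph_mp_l b c)
    have h2 : ple ((b * rimp a (limp b c)) * a) c := by
      rw [ph_mul_assoc]; exact h1
    exact ph_resid_l.mp (ph_resid_r.mp h2)
  · have h1 : ple ((b * limp b (rimp a c)) * a) c :=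
      ph_ple_trans (ph_mul_mono_right a (ph_mp_l b (rimp a c))) (ph_mp_r a c)
    have h2 : ple (b * (limp b (rimp a c) * a)) c := by
      rw [← ph_mul_assoc]; exact h1
    exact ph_resid_r.mp (ph_resid_l.mp h2)

lemma ph_comp_r (u v w : A) : ple (rimp v w * rimp u v) (rimp u w) := by
  apply ph_resid_r.mp
  have h : ple (rimp v w * (rimp u v * u)) w :=
    ph_ple_trans (ph_mul_mono_left _ (ph_mp_r u v)) (ph_mp_r v w)
  rw [← ph_mul_assoc] at h
  exact h

lemma ph_comp_l (u v w : A) : ple (limp u v * limp v w) (limp u w) := by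
  apply ph_resid_l.mp
  have h : ple ((u * limp u v) * limp v w) w :=
    ph_ple_trans (ph_mul_mono_right _ (ph_mp_l u v)) (ph_mp_l v w)
  rw [ph_mul_assoc] at h
  exact h

lemma ph_zero_limp (x : A) : limp (0:A) x = 1 := ph_ple_iff_limp.mp (zero_le x)

/-- the regularization operator `σ x = x⁻∼` -/
def phsg (a : A) : A := negl (negr a)

lemma ph_le_sg (a : A) : ple a (phsg a) := ph_resid_l.mp (ph_mp_r a 0)

lemma ph_le_tau (a : A) : ple a (negr (negl a)) := ph_resid_r.mp (ph_mp_l a 0)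

lemma ph_negr_sg (a : A) : negr (phsg a) = negr a := by
  apply ph_antisymm
  · exact ph_rimp_anti 0 (ph_le_sg a)
  · exact ph_resid_r.mp (ph_mp_l (negr a) 0)

lemma ph_negl_tau (a : A) : negl (negr (negl a)) = negl a := by
  apply ph_antisymm
  · exact ph_limp_anti 0 (ph_le_tau a)
  · exact ph_resid_l.mp (ph_mp_r (negl a) 0)

lemma ph_sg_mono {a b : A} (h : ple a b) : ple (phsg a) (phsg b) :=
  ph_limp_anti 0 (ph_rimp_anti 0 h)

lemma ph_sg_negl (a : A) : phsg (negl a) = negl a := ph_negl_tau a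

lemma ph_contra_r (a b : A) : ple (rimp a b) (limp (negr b) (negr a)) := by
  have h1 : ple ((negr b) * (rimp a b * a)) 0 :=
    ph_ple_trans (ph_mul_mono_left _ (ph_mp_r a b)) (ph_mp_r b 0)
  have h2 : ple (((negr b) * rimp a b) * a) 0 := by rw [ph_mul_assoc]; exact h1
  exact ph_resid_l.mp (ph_resid_r.mp h2)

lemma ph_contra_l (a b : A) : ple (limp a b) (rimp (negl b) (negl a)) := by
  have h1 : ple (a * (limp a b * negl b)) 0 := by
    rw [← ph_mul_assoc]
    exact ph_ple_trans (ph_mul_mono_right _ (ph_mp_l a b)) (ph_mp_l b 0)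
  exact ph_resid_r.mp (ph_resid_l.mp h1)

section Good

lemma ph_sg_eq_tau (hg : IsGood A) (a : A) : phsg a = negr (negl a) := hg a

lemma ph_sg_negr (hg : IsGood A) (a : A) : phsg (negr a) = negr a := by
  calc phsg (negr a) = negr (negl (negr a)) := hg (negr a)
    _ = negr (phsg a) := rfl
    _ = negr a := ph_negr_sg a

lemma ph_negl_sg (hg : IsGood A) (a : A) : negl (phsg a) = negl a := by
  rw [ph_sg_eq_tau hg]; exact ph_negl_tau a

/-- denseness of `σy → y` -/
lemma ph_Z1 (hg : IsGood A) (y : A) : ple (negl (rimp (phsg y) y)) 0 := by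
  set v := rimp (phsg y) y with hv
  have h0 : ple (negr y) v := by
    have h := ph_rimp_mono (phsg y) (zero_le y)
    have h' : ple (negr (phsg y)) v := h
    rw [ph_negr_sg y] at h'
    exact h'
  have hv1 : rimp (negl v) (phsg y) = 1 := ph_limp_anti 0 h0
  have hcol : negl v = rimp (phsg y) (negl v) * phsg y := by
    have hd := div₁ (negl v) (phsg y)
    rw [hv1, one_mul'] at hd
    exact hd
  have hstep : rimp (phsg y) (negl v) * phsg y = phsg y * limp (phsg y) (negl v) :=
    div₂ (phsg y) (negl v)
  have h6 : v * phsg y = y := by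
    have hd := div₁ (phsg y) y
    rw [show rimp y (phsg y) = 1 from ph_le_sg y, one_mul'] at hd
    exact hd
  have h5 : limp (phsg y) (negl v) = negl y := by
    calc limp (phsg y) (negl v) = limp (v * phsg y) 0 := (mul_limp v (phsg y) 0).symm
      _ = negl y := by rw [h6]; rfl
  have hfin : negl v = phsg y * negl y := by rw [hcol, hstep, h5]
  rw [hfin, ph_sg_eq_tau hg y]
  exact ph_mp_r (negl y) 0

/-- denseness of `σy ⇝ y` -/
lemma ph_Z2 (hg : IsGood A) (y : A) : ple (negr (limp (phsg y) y)) 0 := by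
  set v := limp (phsg y) y with hv
  have h0 : ple (negl y) v := by
    have h := ph_limp_mono (phsg y) (zero_le y)
    have h' : ple (negl (phsg y)) v := h
    rw [ph_negl_sg hg y] at h'
    exact h'
  have hv1 : rimp (negr v) (phsg y) = 1 := by
    have h := ph_rimp_anti 0 h0
    have h' : ple (negr v) (negr (negl y)) := h
    rw [← ph_sg_eq_tau hg y] at h'
    exact h'
  have hcol : negr v = rimp (phsg y) (negr v) * phsg y := by
    have hd := div₁ (negr v) (phsg y)
    rw [hv1, one_mul'] at hd
    exact hd
  have h6 : phsg y * v = y := by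
    have hd := div₃ (phsg y) y
    rw [show limp y (phsg y) = 1 from ph_ple_iff_limp.mp (ph_le_sg y), mul_one'] at hd
    exact hd
  have h5 : rimp (phsg y) (negr v) = negr y := by
    calc rimp (phsg y) (negr v) = rimp (phsg y * v) 0 := (mul_rimp (phsg y) v 0).symm
      _ = negr y := by rw [h6]; rfl
  have hfin : negr v = negr y * phsg y := by rw [hcol, h5]
  rw [hfin]
  exact ph_mp_l (negr y) 0

/-- Glivenko: `σ(x→y) = x→σy` -/
lemma ph_A1 (hg : IsGood A) (x y : A) : phsg (rimp x y) = rimp x (phsg y) := by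
  have hS : phsg (rimp x (phsg y)) = rimp x (phsg y) := by
    have hrepr : rimp x (phsg y) = negr (x * negl y) := by
      rw [ph_sg_eq_tau hg y]
      exact (mul_rimp x (negl y) 0).symm
    rw [hrepr]
    exact ph_sg_negr hg _
  apply ph_antisymm
  · have h1 : ple (rimp x y) (rimp x (phsg y)) := ph_rimp_mono x (ph_le_sg y)
    have h2 := ph_sg_mono h1
    rw [hS] at h2
    exact h2
  · set s := rimp x y with hs
    set S := rimp x (phsg y) with hSd
    set k := rimp (phsg y) y with hk
    have k1 : ple (k * S) s := ph_comp_r x (phsg y) y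
    have k2 : ple ((k*S)*(negl s)) 0 :=
      ph_ple_trans (ph_mul_mono_right _ k1) (ph_mp_l s 0)
    have k3 : ple (k * (S * negl s)) 0 := by rw [← ph_mul_assoc]; exact k2
    have k4 : ple (S * negl s) (negl k) := ph_resid_l.mp k3
    have k5 : ple (S * negl s) 0 := ph_ple_trans k4 (ph_Z1 hg y)
    have k6 : ple S (negr (negl s)) := ph_resid_r.mp k5
    rw [← ph_sg_eq_tau hg s] at k6
    exact k6

/-- Glivenko: `σ(x⇝y) = x⇝σy` -/
lemma ph_A2 (hg : IsGood A) (x y : A) : phsg (limp x y) = limp x (phsg y) := by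
  have hS : phsg (limp x (phsg y)) = limp x (phsg y) := by
    have hrepr : limp x (phsg y) = negl (negr y * x) := by
      show limp x (phsg y) = negl (negr y * x)
      exact (mul_limp (negr y) x 0).symm
    rw [hrepr]
    exact ph_sg_negl _
  apply ph_antisymm
  · have h1 : ple (limp x y) (limp x (phsg y)) := ph_limp_mono x (ph_le_sg y)
    have h2 := ph_sg_mono h1
    rw [hS] at h2
    exact h2
  · set s := limp x y with hs
    set S := limp x (phsg y) with hSd
    set k := limp (phsg y) y with hk
    have m1 : ple (S * k) s := ph_comp_l x (phsg y) y
    have m2 : ple ((negr s)*(S*k)) 0 :=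
      ph_ple_trans (ph_mul_mono_left _ m1) (ph_mp_r s 0)
    have m3 : ple (((negr s)*S)*k) 0 := by rw [ph_mul_assoc]; exact m2
    have m4 : ple ((negr s)*S) (negr k) := ph_resid_r.mp m3
    have m5 : ple ((negr s)*S) 0 := ph_ple_trans m4 (ph_Z2 hg y)
    exact ph_resid_l.mp m5

end Good

end PHAux


theorem stmt15 {A : Type u} [BoundedPseudoHoop A] (hg : IsGood A)
    (F : Set A) (hF : IsFilter F) :
    IsFantasticFilter F ↔ IsInvolutiveFilter F := by
  have hone : (1:A) ∈ F := by
    obtain ⟨a, ha⟩ := hF.nonempty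
    exact hF.upward ha (ph_ple_one a)
  constructor
  · rintro ⟨hF', hfan⟩
    refine ⟨hF, fun x => ⟨?_, ?_⟩⟩
    · have h0 : rimp (0:A) x ∈ F := by rw [zero_le x]; exact hone
      exact (hfan x 0).1 h0
    · have h0 : limp (0:A) x ∈ F := by rw [ph_zero_limp x]; exact hone
      exact (hfan x 0).2 h0
  · rintro ⟨hF', hinv⟩
    refine ⟨hF, fun x y => ⟨?_, ?_⟩⟩
    · -- fantastic, first clause
      intro ht
      have st3 : rimp (phsg y) (phsg x) ∈ F :=
        hF.upward ht (ph_ple_trans (ph_contra_r y x) (ph_contra_l (negr x) (negr y)))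
      have hTeq : rimp (phsg y) (phsg x) = limp (negr x) (negr y) := by
        have h : rimp (phsg y) (limp (negr x) 0) = limp (negr x) (rimp (phsg y) 0) :=
          ph_exchange (phsg y) (negr x) (0:A)
        have h2 : limp (negr x) (negr (phsg y)) = limp (negr x) (negr y) := by
          rw [ph_negr_sg y]
        exact h.trans h2
      have hSeq : rimp x (phsg y) = limp (negr y) (negr x) :=
        ph_exchange x (negr y) (0:A)
      have st4 : ple (rimp (phsg y) (phsg x))
          (rimp (limp (rimp x (phsg y)) (phsg y)) (phsg x)) := by
        set T := rimp (phsg y) (phsg x) with hT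
        set S := rimp x (phsg y) with hSd
        set K := limp S (phsg y) with hKd
        have e : negr x * (T*K) = negr y * (S*K) := by
          rw [← ph_mul_assoc, hTeq, div₃ (negr x) (negr y), ← hSeq, ph_mul_assoc]
        have h1 : ple (negr y * (S*K)) 0 :=
          ph_ple_trans (ph_mul_mono_left _ (ph_mp_l S (phsg y))) (ph_mp_l (negr y) 0)
        have h2 : ple (negr x * (T*K)) 0 := by rw [e]; exact h1
        exact ph_resid_r.mp (ph_resid_l.mp h2)
      have st5 : rimp (limp (rimp x (phsg y)) (phsg y)) (phsg x) ∈ F := hF.upward st3 st4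
      have st6 : limp (rimp x (phsg y)) (rimp x y) ∈ F := by
        have h := (hinv (rimp x y)).2
        have he : negr (negl (rimp x y)) = rimp x (phsg y) := by
          rw [← ph_sg_eq_tau hg (rimp x y)]
          exact ph_A1 hg x y
        rw [he] at h
        exact h
      have st8 : ple (limp (rimp x (phsg y)) (rimp x y))
          (rimp (limp (rimp x y) (phsg y)) (limp (rimp x (phsg y)) (phsg y))) := by
        set s := rimp x y with hsd
        set S := rimp x (phsg y) with hSd
        have h1 : ple (S * (limp S s * limp s (phsg y))) (phsg y) := by
          rw [← ph_mul_assoc]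
          exact ph_ple_trans (ph_mul_mono_right _ (ph_mp_l S s)) (ph_mp_l s (phsg y))
        exact ph_resid_r.mp (ph_resid_l.mp h1)
      have st9 : rimp (limp (rimp x y) (phsg y)) (limp (rimp x (phsg y)) (phsg y)) ∈ F :=
        hF.upward st6 st8
      have st10 : rimp (limp (rimp x y) (phsg y)) (phsg x) ∈ F :=
        hF.upward (hF.mul_mem st5 st9) (ph_comp_r _ _ _)
      have st11 : rimp (limp (rimp x y) y) (phsg x) ∈ F :=
        hF.upward st10 (ph_rimp_anti _ (ph_limp_mono _ (ph_le_sg y)))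
      have st12 : rimp (phsg x) x ∈ F := (hinv x).1
      exact hF.upward (hF.mul_mem st12 st11) (ph_comp_r _ _ _)
    · -- fantastic, second clause
      intro ht
      have st3 : limp (phsg y) (phsg x) ∈ F := by
        have h2' : ple (rimp (negl x) (negl y)) (limp (phsg y) (phsg x)) := by
          rw [ph_sg_eq_tau hg y, ph_sg_eq_tau hg x]
          exact ph_contra_r (negl x) (negl y)
        exact hF.upward ht (ph_ple_trans (ph_contra_l y x) h2')
      have hTeq : limp (phsg y) (phsg x) = rimp (negl x) (negl y) := by
        rw [ph_sg_eq_tau hg x]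
        have h : limp (phsg y) (rimp (negl x) 0) = rimp (negl x) (limp (phsg y) 0) :=
          (ph_exchange (negl x) (phsg y) (0:A)).symm
        have hc : rimp (negl x) (negl (phsg y)) = rimp (negl x) (negl y) := by
          rw [ph_negl_sg hg y]
        exact h.trans hc
      have hSeq : limp x (phsg y) = rimp (negl y) (negl x) := by
        rw [show phsg y = negr (negl y) from ph_sg_eq_tau hg y]
        exact (ph_exchange (negl y) x (0:A)).symm
      have st4 : ple (limp (phsg y) (phsg x))
          (limp (rimp (limp x (phsg y)) (phsg y)) (phsg x)) := by
        set T := limp (phsg y) (phsg x) with hT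
        set S := limp x (phsg y) with hSd
        set K := rimp S (phsg y) with hKd
        have e : (K*T) * negl x = (K*S) * negl y := by
          rw [ph_mul_assoc, hTeq, div₁ (negl x) (negl y), ← hSeq, ← ph_mul_assoc]
        have h1 : ple ((K*S) * negl y) 0 := by
          refine ph_ple_trans (ph_mul_mono_right _ (ph_mp_r S (phsg y))) ?_
          rw [ph_sg_eq_tau hg y]
          exact ph_mp_r (negl y) 0
        have h2 : ple ((K*T) * negl x) 0 := by rw [e]; exact h1
        have h3 : ple (K*T) (negr (negl x)) := ph_resid_r.mp h2
        have h4 : ple (K*T) (phsg x) := by rw [ph_sg_eq_tau hg x]; exact h3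
        exact ph_resid_l.mp h4
      have st5 : limp (rimp (limp x (phsg y)) (phsg y)) (phsg x) ∈ F := hF.upward st3 st4
      have st6 : rimp (limp x (phsg y)) (limp x y) ∈ F := by
        have h := (hinv (limp x y)).1
        have he : negl (negr (limp x y)) = limp x (phsg y) := ph_A2 hg x y
        rw [he] at h
        exact h
      have st8 : ple (rimp (limp x (phsg y)) (limp x y))
          (limp (rimp (limp x y) (phsg y)) (rimp (limp x (phsg y)) (phsg y))) := by
        set s := limp x y with hsd
        set S := limp x (phsg y) with hSd
        have h1 : ple ((rimp s (phsg y) * rimp S s) * S) (phsg y) := by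
          rw [ph_mul_assoc]
          exact ph_ple_trans (ph_mul_mono_left _ (ph_mp_r S s)) (ph_mp_r s (phsg y))
        exact ph_resid_l.mp (ph_resid_r.mp h1)
      have st9 : limp (rimp (limp x y) (phsg y)) (rimp (limp x (phsg y)) (phsg y)) ∈ F :=
        hF.upward st6 st8
      have st10 : limp (rimp (limp x y) (phsg y)) (phsg x) ∈ F :=
        hF.upward (hF.mul_mem st9 st5) (ph_comp_l _ _ _)
      have st11 : limp (rimp (limp x y) y) (phsg x) ∈ F :=
        hF.upward st10 (ph_limp_anti _ (ph_rimp_mono _ (ph_le_sg y)))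
      have st12 : limp (phsg x) x ∈ F := by
        have h := (hinv x).2
        rw [show negr (negl x) = phsg x from (ph_sg_eq_tau hg x).symm] at h
        exact h
      exact hF.upward (hF.mul_mem st11 st12) (ph_comp_l _ _ _)
end
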